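/- For relations r : B → A ⊗ A and s : E → A ⊗ A in a C-category, the relation corresponding (via the isomorphism Φ/Ψ between relations and bicomodules) to the product bicomodule Φ(r) ⊠ Φ(s) is r ⊡ s = (γ_A ⊗ β_A) ∘ ((1_A ⊗ ε_A) ⊗ (ε_A ⊗ 1_A)) ∘ (r ⊗ s) : B ⊗ E → A ⊗ A, i.e., Φ(r ⊡ s) = Φ(r) ⊠ Φ(s). -/

import Mathlib

open CategoryTheory MonoidalCategory

variable {C : Type*} [Category C] [MonoidalCategory C] [SymmetricCategory C]

/-- A C-category structure on a symmetric monoidal category: every object carries a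
fixed cocommutative comonoid structure, naturally in the object and compatibly with
the tensor product. -/
structure CStructure (C : Type*) [Category C] [MonoidalCategory C]
    [SymmetricCategory C] where
  δ : ∀ X : C, X ⟶ X ⊗ X
  ε : ∀ X : C, X ⟶ 𝟙_ C
  coassoc : ∀ X : C, δ X ≫ (X ◁ δ X) ≫ (α_ X X X).inv = δ X ≫ (δ X ▷ X)
  counit_left : ∀ X : C, δ X ≫ (ε X ▷ X) ≫ (λ_ X).hom = 𝟙 X
  counit_right : ∀ X : C, δ X ≫ (X ◁ ε X) ≫ (ρ_ X).hom = 𝟙 X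
  cocomm : ∀ X : C, δ X ≫ (β_ X X).hom = δ X
  δ_natural : ∀ {X Y : C} (f : X ⟶ Y), f ≫ δ Y = δ X ≫ (f ⊗ₘ f)
  ε_natural : ∀ {X Y : C} (f : X ⟶ Y), f ≫ ε Y = ε X
  δ_tensor : ∀ X Y : C, δ (X ⊗ Y) =
    (δ X ⊗ₘ δ Y) ≫ (α_ X X (Y ⊗ Y)).hom ≫ (X ◁ (α_ X Y Y).inv) ≫
      (X ◁ ((β_ X Y).hom ▷ Y)) ≫ (X ◁ (α_ Y X Y).hom) ≫ (α_ X Y (X ⊗ Y)).inv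
  ε_tensor : ∀ X Y : C, ε (X ⊗ Y) = (ε X ⊗ₘ ε Y) ≫ (λ_ (𝟙_ C)).hom

/-- The left coaction `Φ(r)^l` induced by a relation `r : B ⟶ A ⊗ A`. -/
def PhiL (S : CStructure C) (A B : C) (r : B ⟶ A ⊗ A) : B ⟶ A ⊗ B :=
  S.δ B ≫ (r ▷ B) ≫ ((A ◁ S.ε A) ▷ B) ≫ ((ρ_ A).hom ▷ B)

/-- The right coaction `Φ(r)^r` induced by a relation `r : B ⟶ A ⊗ A`. -/
def PhiR (S : CStructure C) (A B : C) (r : B ⟶ A ⊗ A) : B ⟶ B ⊗ A :=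
  S.δ B ≫ (B ◁ r) ≫ (B ◁ (S.ε A ▷ A)) ≫ (B ◁ (λ_ A).hom)

/-- The product of relations
`r ⊡ s = (γ_A ⊗ β_A) ∘ ((1_A ⊗ ε_A) ⊗ (ε_A ⊗ 1_A)) ∘ (r ⊗ s) : B ⊗ E ⟶ A ⊗ A`. -/
def boxdot (S : CStructure C) (A B E : C) (r : B ⟶ A ⊗ A) (s : E ⟶ A ⊗ A) :
    B ⊗ E ⟶ A ⊗ A :=
  (r ⊗ₘ s) ≫ ((A ◁ S.ε A) ⊗ₘ (S.ε A ▷ A)) ≫ ((ρ_ A).hom ⊗ₘ (λ_ A).hom)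


section PhiBoxdotAux

lemma innerL_aux (B E : C) (d : E ⟶ E ⊗ E) (e : E ⟶ 𝟙_ C) (hE : d ≫ (e ▷ E) = (λ_ E).inv) :
    (B ◁ d) ≫ (α_ B E E).inv ≫ ((β_ B E).hom ▷ E) ≫ ((e ▷ B) ▷ E) ≫
      (α_ (𝟙_ C) B E).hom ≫ (λ_ (B ⊗ E)).hom = 𝟙 (B ⊗ E) := by
  rw [← comp_whiskerRight_assoc, ← BraidedCategory.braiding_naturality_right]
  simp [hE]
  rw [← MonoidalCategory.whiskerLeft_comp_assoc, hE]
  simp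

lemma structL_aux (S : CStructure C) (B E : C) :
    S.δ (B ⊗ E) ≫ (((B ◁ S.ε E) ≫ (ρ_ B).hom) ▷ (B ⊗ E))
      = (S.δ B ▷ E) ≫ (α_ B B E).hom := by
  have hE : S.δ E ≫ (S.ε E ▷ E) = (λ_ E).inv := by
    rw [← cancel_mono (λ_ E).hom, Category.assoc, S.counit_left E]; simp
  rw [S.δ_tensor]
  simp only [MonoidalCategory.tensorHom_def, Category.assoc, whisker_exchange_assoc, whisker_exchange]
  simp
  simp only [← MonoidalCategory.whiskerLeft_comp]
  rw [innerL_aux B E (S.δ E) (S.ε E) hE]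
  simp

lemma keyL_aux (S : CStructure C) (A B E : C) (f : B ⟶ A) :
    S.δ (B ⊗ E) ≫ (((f ⊗ₘ S.ε E) ≫ (ρ_ A).hom) ▷ (B ⊗ E))
      = ((S.δ B ≫ (f ▷ B)) ▷ E) ≫ (α_ A B E).hom := by
  have h : (f ⊗ₘ S.ε E) ≫ (ρ_ A).hom = ((B ◁ S.ε E) ≫ (ρ_ B).hom) ≫ f := by
    rw [tensorHom_def']; simp
  rw [h, comp_whiskerRight, reassoc_of% (structL_aux S B E)]
  simp

lemma innerR_aux (B E : C) (d : E ⟶ E ⊗ E) (e : B ⟶ 𝟙_ C) :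
    (B ◁ d) ≫ (α_ B E E).inv ≫ ((β_ B E).hom ▷ E) ≫ (α_ E B E).hom ≫
      (E ◁ ((e ▷ E) ≫ (λ_ E).hom)) = (e ▷ E) ≫ (λ_ E).hom ≫ d := by
  rw [MonoidalCategory.whiskerLeft_comp, ← associator_naturality_middle_assoc,
    ← comp_whiskerRight_assoc, ← BraidedCategory.braiding_naturality_left]
  simp only [comp_whiskerRight, Category.assoc]
  rw [← associator_inv_naturality_left_assoc, whisker_exchange_assoc]
  simp

lemma structR_aux (S : CStructure C) (B E : C) :
    S.δ (B ⊗ E) ≫ ((B ⊗ E) ◁ ((S.ε B ▷ E) ≫ (λ_ E).hom))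
      = (B ◁ S.δ E) ≫ (α_ B E E).inv := by
  have hB : S.δ B ≫ (B ◁ S.ε B) = (ρ_ B).inv := by
    rw [← cancel_mono (ρ_ B).hom, Category.assoc, S.counit_right B]; simp
  rw [S.δ_tensor]
  simp only [MonoidalCategory.tensorHom_def, Category.assoc, whisker_exchange_assoc, whisker_exchange]
  simp
  simp only [← MonoidalCategory.whiskerLeft_comp, ← Category.assoc]
  simp only [Category.assoc]
  rw [innerR_aux B E (S.δ E) (S.ε B)]
  simp only [MonoidalCategory.whiskerLeft_comp, Category.assoc]
  rw [← associator_naturality_middle_assoc, ← comp_whiskerRight_assoc, hB]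
  simp

lemma keyR_aux (S : CStructure C) (A B E : C) (f : E ⟶ A) :
    S.δ (B ⊗ E) ≫ ((B ⊗ E) ◁ ((S.ε B ⊗ₘ f) ≫ (λ_ A).hom))
      = (B ◁ (S.δ E ≫ (E ◁ f))) ≫ (α_ B E A).inv := by
  have h : (S.ε B ⊗ₘ f) ≫ (λ_ A).hom = ((S.ε B ▷ E) ≫ (λ_ E).hom) ≫ f := by
    rw [MonoidalCategory.tensorHom_def]; simp
  rw [h, MonoidalCategory.whiskerLeft_comp, reassoc_of% (structR_aux S B E)]
  simp

end PhiBoxdotAux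

/-- For relations `r : B ⟶ A ⊗ A` and `s : E ⟶ A ⊗ A` in a C-category, the relation
corresponding to the product bicomodule is `r ⊡ s`: `Φ(r ⊡ s) = Φ(r) ⊠ Φ(s)`,
i.e. the coactions induced by `r ⊡ s` on `B ⊗ E` agree with the product coactions
`α⁻¹_{A,B,E} ∘ (Φ(r)^l ⊗ 1_E)` and `α_{B,E,A} ∘ (1_B ⊗ Φ(s)^r)`. -/
theorem phi_boxdot (S : CStructure C) (A B E : C) (r : B ⟶ A ⊗ A) (s : E ⟶ A ⊗ A) :
    (PhiL S A (B ⊗ E) (boxdot S A B E r s)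
        = (PhiL S A B r ▷ E) ≫ (α_ A B E).hom) ∧
    (PhiR S A (B ⊗ E) (boxdot S A B E r s)
        = (B ◁ PhiR S A E s) ≫ (α_ B E A).inv) := by
  constructor
  · have hq : boxdot S A B E r s ≫ (A ◁ S.ε A) ≫ (ρ_ A).hom
        = ((r ≫ (A ◁ S.ε A) ≫ (ρ_ A).hom) ⊗ₘ S.ε E) ≫ (ρ_ A).hom := by
      have h2 : s ≫ (S.ε A ▷ A) ≫ (λ_ A).hom ≫ S.ε A = S.ε E := by
        simp [S.ε_natural]
      rw [← h2, boxdot]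
      simp only [MonoidalCategory.tensorHom_def, Category.assoc, whisker_exchange_assoc, whisker_exchange]
      simp
    rw [PhiL, ← comp_whiskerRight_assoc, ← comp_whiskerRight, Category.assoc, hq,
      keyL_aux S A B E (r ≫ (A ◁ S.ε A) ≫ (ρ_ A).hom)]
    simp [PhiL]
  · have hq : boxdot S A B E r s ≫ (S.ε A ▷ A) ≫ (λ_ A).hom
        = (S.ε B ⊗ₘ (s ≫ (S.ε A ▷ A) ≫ (λ_ A).hom)) ≫ (λ_ A).hom := by
      have h2 : r ≫ (A ◁ S.ε A) ≫ (ρ_ A).hom ≫ S.ε A = S.ε B := by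
        simp [S.ε_natural]
      rw [← h2, boxdot]
      simp only [MonoidalCategory.tensorHom_def, Category.assoc, whisker_exchange_assoc, whisker_exchange]
      simp
    rw [PhiR, ← MonoidalCategory.whiskerLeft_comp_assoc,
      ← MonoidalCategory.whiskerLeft_comp, Category.assoc, hq,
      keyR_aux S A B E (s ≫ (S.ε A ▷ A) ≫ (λ_ A).hom)]
    simp [PhiR]
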